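/- arXiv:2012.00460 — 2 statements merged into one kernel-verified Lean document; each statement's English description precedes it below -/
import Mathlib

section
/- Let r > 1/2 and p ≥ D ≥ 1 be integers. Then there exists a constant C_r depending only on r such that ∑_{k=D+1}^∞ log(k)/k^{2r} ≤ C_r ( log(p)/D^{2r-1} + 1/p^{r-1/2} ). -/
open Finset in
lemma my_sum_tail_rpow_le (s : ℝ) (hs : 1 < s) (D : ℕ) (hD : 1 ≤ D) :
    (∑' k : ℕ, if D + 1 ≤ k then ((k : ℝ) ^ s)⁻¹ else 0) ≤ (D : ℝ) ^ (1 - s) / (s - 1) := by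
  have hsum : Summable (fun k : ℕ => if D + 1 ≤ k then ((k : ℝ) ^ s)⁻¹ else 0) := by
    apply Summable.of_nonneg_of_le (fun k => ?_) (fun k => ?_)
      (Real.summable_nat_rpow_inv.mpr hs)
    · split <;> positivity
    · split
      · exact le_rfl
      · positivity
  apply Summable.tsum_le_of_sum_le hsum
  intro F
  obtain ⟨N, hN⟩ : ∃ N : ℕ, D ≤ N ∧ ∀ k ∈ F, k < N + 1 :=
    ⟨max D (F.sup id), le_max_left _ _, fun k hk =>
      Nat.lt_succ_of_le (le_max_of_le_right (Finset.le_sup (f := id) hk))⟩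
  calc (∑ k ∈ F, if D + 1 ≤ k then ((k : ℝ) ^ s)⁻¹ else 0)
      ≤ ∑ k ∈ range (N + 1), (if D + 1 ≤ k then ((k : ℝ) ^ s)⁻¹ else 0) := by
        apply Finset.sum_le_sum_of_subset_of_nonneg
        · intro k hk; exact Finset.mem_range.mpr (hN.2 k hk)
        · intro k _ _; split <;> positivity
    _ = ∑ k ∈ Finset.Ico (D + 1) (N + 1), ((k : ℝ) ^ s)⁻¹ := by
        rw [← Finset.sum_filter]
        congr 1
        ext k
        simp only [Finset.mem_filter, Finset.mem_Ico, Finset.mem_range, Nat.lt_succ_iff]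
        omega
    _ = ∑ i ∈ Finset.Ico D N, ((((i + 1 : ℕ)) : ℝ)) ^ (-s) := by
        rw [Finset.sum_Ico_eq_sum_range, Finset.sum_Ico_eq_sum_range,
          show N + 1 - (D + 1) = N - D from by omega]
        apply Finset.sum_congr rfl
        intro i _
        rw [show D + 1 + i = D + i + 1 from by omega, Real.rpow_neg (by positivity)]
    _ ≤ ∫ x in (D : ℝ)..(N : ℝ), x ^ (-s) := by
        refine AntitoneOn.sum_le_integral_Ico (f := fun x : ℝ => x ^ (-s)) hN.1 fun x hx y hy hxy => ?_
        exact Real.rpow_le_rpow_of_nonpos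
          (lt_of_lt_of_le (by exact_mod_cast hD) hx.1) hxy (by linarith)
    _ ≤ (D : ℝ) ^ (1 - s) / (s - 1) := by
        have hD0 : (0 : ℝ) < D := by exact_mod_cast hD
        have hN0 : (0 : ℝ) < N := lt_of_lt_of_le hD0 (by exact_mod_cast hN.1)
        rw [integral_rpow (Or.inr ⟨by intro h; linarith, by
          rw [Set.uIcc_of_le (by exact_mod_cast hN.1)]
          intro h; exact absurd h.1 (by linarith)⟩)]
        rw [show (-s + 1) = 1 - s from by ring]
        have h1 : (0:ℝ) ≤ (N:ℝ) ^ (1 - s) := by positivity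
        rw [show ((N:ℝ) ^ (1-s) - (D:ℝ) ^ (1-s)) / (1 - s)
            = ((D:ℝ) ^ (1-s) - (N:ℝ) ^ (1-s)) / (s - 1) from by
          rw [div_eq_div_iff (by linarith) (by linarith)]; ring]
        gcongr
        · linarith

/-- For `r > 1/2` there is a constant `C_r` (depending only on `r`) such that for all
integers `1 ≤ D ≤ p`,
`∑_{k=D+1}^∞ log(k)/k^{2r} ≤ C_r (log(p)/D^{2r-1} + 1/p^{r-1/2})`. -/
theorem stmt0 (r : ℝ) (hr : 1 / 2 < r) :
    ∃ C : ℝ, 0 < C ∧ ∀ (D p : ℕ), 1 ≤ D → D ≤ p →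
      (∑' k : ℕ, if D + 1 ≤ k then Real.log k / (k : ℝ) ^ (2 * r) else 0)
        ≤ C * (Real.log p / (D : ℝ) ^ (2 * r - 1) + 1 / (p : ℝ) ^ (r - 1 / 2)) := by
  set a : ℝ := r - 1 / 2 with ha_def
  have ha : 0 < a := by simp [ha_def]; linarith
  have h2r : 1 < 2 * r := by linarith
  refine ⟨1 / (2 * r - 1) + 1 / (a * a),
    add_pos (div_pos one_pos (by linarith)) (div_pos one_pos (by positivity)),
    fun D p hD hDp => ?_⟩
  have hp1 : 1 ≤ p := hD.trans hDp
  have hD0 : (0 : ℝ) < D := by exact_mod_cast hD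
  have hp0 : (0 : ℝ) < p := by exact_mod_cast hp1
  have hlogp : 0 ≤ Real.log p := Real.log_nonneg (by exact_mod_cast hp1)
  -- the two comparison sequences
  set g1 : ℕ → ℝ := fun k => Real.log p * (if D + 1 ≤ k then ((k : ℝ) ^ (2 * r))⁻¹ else 0)
    with hg1_def
  set g2 : ℕ → ℝ := fun k =>
    1 / a * ((p : ℝ) ^ a)⁻¹ * (if D + 1 ≤ k then ((k : ℝ) ^ (r + 1 / 2))⁻¹ else 0) with hg2_def
  have hsum1 : Summable (fun k : ℕ => if D + 1 ≤ k then ((k : ℝ) ^ (2 * r))⁻¹ else 0) := by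
    apply Summable.of_nonneg_of_le (fun k => ?_) (fun k => ?_)
      (Real.summable_nat_rpow_inv.mpr h2r)
    · split <;> positivity
    · split
      · exact le_rfl
      · positivity
  have hsum2 : Summable (fun k : ℕ => if D + 1 ≤ k then ((k : ℝ) ^ (r + 1 / 2))⁻¹ else 0) := by
    apply Summable.of_nonneg_of_le (fun k => ?_) (fun k => ?_)
      (Real.summable_nat_rpow_inv.mpr (show (1:ℝ) < r + 1 / 2 by linarith))
    · split <;> positivity
    · split
      · exact le_rfl
      · positivity
  have hg1 : Summable g1 := hsum1.mul_left _
  have hg2 : Summable g2 := hsum2.mul_left _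
  -- pointwise bound
  have hle : ∀ k : ℕ, (if D + 1 ≤ k then Real.log k / (k : ℝ) ^ (2 * r) else 0)
      ≤ g1 k + g2 k := by
    intro k
    simp only [hg1_def, hg2_def]
    by_cases hk : D + 1 ≤ k
    · simp only [hk, if_pos]
      have hk0 : (0 : ℝ) < k := by
        have : 1 ≤ k := by omega
        exact_mod_cast this
      have hkp : (0 : ℝ) < (k : ℝ) / p := by positivity
      have hlogk : Real.log k ≤ Real.log p + 1 / a * ((k : ℝ) / p) ^ a := by
        have h1 : Real.log ((k : ℝ) / p) ≤ ((k : ℝ) / p) ^ a / a := by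
          have h2 := Real.log_le_sub_one_of_pos (Real.rpow_pos_of_pos hkp a)
          rw [Real.log_rpow hkp] at h2
          rw [le_div_iff₀ ha]
          nlinarith [Real.rpow_pos_of_pos hkp a]
        have h3 : Real.log ((k : ℝ) / p) = Real.log k - Real.log p :=
          Real.log_div (ne_of_gt hk0) (ne_of_gt hp0)
        rw [h3] at h1
        rw [div_eq_mul_inv, mul_comm] at h1 ⊢
        linarith [h1]
      have hE : ((k : ℝ) / p) ^ a * ((k : ℝ) ^ (2 * r))⁻¹
          = ((p : ℝ) ^ a)⁻¹ * ((k : ℝ) ^ (r + 1 / 2))⁻¹ := by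
        have e2 : (k:ℝ) ^ a * (((k:ℝ)) ^ (2 * r))⁻¹ = (((k:ℝ)) ^ (r + 1 / 2))⁻¹ := by
          rw [show (((k:ℝ)) ^ (2 * r))⁻¹ = (k:ℝ) ^ (-(2 * r)) from
              (Real.rpow_neg hk0.le _).symm,
            show (((k:ℝ)) ^ (r + 1 / 2))⁻¹ = (k:ℝ) ^ (-(r + 1 / 2)) from
              (Real.rpow_neg hk0.le _).symm,
            ← Real.rpow_add hk0]
          congr 1
          simp [ha_def]
          ring
        calc ((k:ℝ) / p) ^ a * ((k:ℝ) ^ (2 * r))⁻¹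
            = ((p:ℝ) ^ a)⁻¹ * ((k:ℝ) ^ a * ((k:ℝ) ^ (2 * r))⁻¹) := by
              rw [Real.div_rpow hk0.le hp0.le]; ring
          _ = ((p:ℝ) ^ a)⁻¹ * ((k:ℝ) ^ (r + 1 / 2))⁻¹ := by rw [e2]
      calc Real.log k / (k : ℝ) ^ (2 * r)
          ≤ (Real.log p + 1 / a * ((k : ℝ) / p) ^ a) * ((k : ℝ) ^ (2 * r))⁻¹ := by
            rw [div_eq_mul_inv]
            exact mul_le_mul_of_nonneg_right hlogk (by positivity)
        _ = Real.log p * ((k : ℝ) ^ (2 * r))⁻¹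
            + 1 / a * (((k : ℝ) / p) ^ a * ((k : ℝ) ^ (2 * r))⁻¹) := by ring
        _ = Real.log p * ((k : ℝ) ^ (2 * r))⁻¹
            + 1 / a * ((p : ℝ) ^ a)⁻¹ * ((k : ℝ) ^ (r + 1 / 2))⁻¹ := by rw [hE]; ring
    · simp [hk]
  have hf : Summable (fun k : ℕ =>
      if D + 1 ≤ k then Real.log k / (k : ℝ) ^ (2 * r) else 0) := by
    apply Summable.of_nonneg_of_le (fun k => ?_) hle (hg1.add hg2)
    split
    · rename_i h
      have : (1 : ℝ) ≤ k := by exact_mod_cast (by omega : 1 ≤ k)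
      have := Real.log_nonneg this
      positivity
    · exact le_rfl
  have hsplit := Summable.tsum_le_tsum hle hf (hg1.add hg2)
  rw [Summable.tsum_add hg1 hg2] at hsplit
  -- bound the two tsums
  have hT1 : ∑' k, g1 k ≤ Real.log p * ((D : ℝ) ^ (1 - 2 * r) / (2 * r - 1)) := by
    rw [hg1_def, tsum_mul_left]
    exact mul_le_mul_of_nonneg_left (my_sum_tail_rpow_le _ h2r D hD) hlogp
  have hT2 : ∑' k, g2 k
      ≤ 1 / a * ((p : ℝ) ^ a)⁻¹ * ((D : ℝ) ^ (1 - (r + 1 / 2)) / (r + 1 / 2 - 1)) := by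
    rw [hg2_def, tsum_mul_left]
    exact mul_le_mul_of_nonneg_left (my_sum_tail_rpow_le _ (by linarith) D hD) (by positivity)
  -- final arithmetic
  have hDpow : (D : ℝ) ^ (1 - 2 * r) = ((D : ℝ) ^ (2 * r - 1))⁻¹ := by
    rw [show (1 - 2 * r) = -(2 * r - 1) from by ring, Real.rpow_neg hD0.le]
  have hDpow2 : (D : ℝ) ^ (1 - (r + 1 / 2)) ≤ 1 :=
    Real.rpow_le_one_of_one_le_of_nonpos (by exact_mod_cast hD) (by linarith)
  have hX : Real.log p / (D : ℝ) ^ (2 * r - 1) = Real.log p * ((D : ℝ) ^ (2 * r - 1))⁻¹ :=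
    div_eq_mul_inv _ _
  have hY : 1 / (p : ℝ) ^ (r - 1 / 2) = ((p : ℝ) ^ a)⁻¹ := one_div _
  have hXpos : 0 ≤ Real.log p * ((D : ℝ) ^ (2 * r - 1))⁻¹ := by positivity
  have hYpos : (0:ℝ) ≤ ((p : ℝ) ^ a)⁻¹ := by positivity
  have haeq : r + 1 / 2 - 1 = a := by ring
  rw [hX, hY]
  have h2T2 : 1 / a * ((p : ℝ) ^ a)⁻¹ * ((D : ℝ) ^ (1 - (r + 1 / 2)) / (r + 1 / 2 - 1))
      ≤ 1 / (a * a) * ((p : ℝ) ^ a)⁻¹ := by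
    rw [haeq]
    have : (D : ℝ) ^ (1 - (r + 1 / 2)) / a ≤ 1 / a := by gcongr
    calc 1 / a * ((p : ℝ) ^ a)⁻¹ * ((D : ℝ) ^ (1 - (r + 1 / 2)) / a)
        ≤ 1 / a * ((p : ℝ) ^ a)⁻¹ * (1 / a) := by gcongr
      _ = 1 / (a * a) * ((p : ℝ) ^ a)⁻¹ := by field_simp
  have h2r1 : (0:ℝ) < 2 * r - 1 := by linarith
  calc (∑' k : ℕ, if D + 1 ≤ k then Real.log k / (k : ℝ) ^ (2 * r) else 0)
      ≤ ∑' k, g1 k + ∑' k, g2 k := hsplit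
    _ ≤ Real.log p * ((D : ℝ) ^ (1 - 2 * r) / (2 * r - 1))
        + 1 / (a * a) * ((p : ℝ) ^ a)⁻¹ := by linarith [hT2.trans h2T2]
    _ = 1 / (2 * r - 1) * (Real.log p * ((D : ℝ) ^ (2 * r - 1))⁻¹)
        + 1 / (a * a) * ((p : ℝ) ^ a)⁻¹ := by rw [hDpow]; ring
    _ ≤ (1 / (2 * r - 1) + 1 / (a * a))
        * (Real.log p * ((D : ℝ) ^ (2 * r - 1))⁻¹ + ((p : ℝ) ^ a)⁻¹) := by
        have c1 : (0:ℝ) < 1 / (2 * r - 1) := by positivity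
        have c2 : (0:ℝ) < 1 / (a * a) := by positivity
        nlinarith
end

section
/- For every δ > 0 and integers s, p with 1 ≤ s < p/3, consider Θ(δ,s) = { θ ∈ {−δ√(2/s), 0, δ√(2/s)}^p : ‖θ‖_0 = s }. There exists a subset Θ̃(δ,s) ⊆ Θ(δ,s) with |Θ̃(δ,s)| ≥ exp( (s/2) log((p−s)/(s/2)) ) such that for any distinct θ, θ' ∈ Θ̃(δ,s): δ² ≤ ‖θ − θ'‖₂² ≤ 8δ². -/
open Finset

lemma greedy {α : Type*} [DecidableEq α] (V : Finset α) (R : α → α → Prop) [DecidableRel R]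
    (href : ∀ a ∈ V, R a a) (hsym : ∀ a b, R a b → R b a) (B : ℕ)
    (hB : ∀ c ∈ V, (V.filter fun v => R c v).card ≤ B) :
    ∃ C ⊆ V, (∀ x ∈ C, ∀ y ∈ C, x ≠ y → ¬ R x y) ∧ V.card ≤ C.card * B := by

  have hne : (V.powerset.filter (fun C => ∀ x ∈ C, ∀ y ∈ C, x ≠ y → ¬ R x y)).Nonempty :=
    ⟨∅, by simp⟩
  obtain ⟨C, hCP, hmax⟩ :=
    (V.powerset.filter (fun C => ∀ x ∈ C, ∀ y ∈ C, x ≠ y → ¬ R x y)).exists_max_image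
      Finset.card hne
  rw [mem_filter, mem_powerset] at hCP
  obtain ⟨hCV, hfar⟩ := hCP
  refine ⟨C, hCV, hfar, ?_⟩
  have hcov : ∀ v ∈ V, ∃ c ∈ C, R c v := by
    intro v hv
    by_contra hcon
    push_neg at hcon
    have hvC : v ∉ C := fun h => hcon v h (href v hv)
    have hmem : insert v C ∈ V.powerset.filter (fun C => ∀ x ∈ C, ∀ y ∈ C, x ≠ y → ¬ R x y) := by
      rw [mem_filter, mem_powerset]
      refine ⟨insert_subset hv hCV, ?_⟩
      intro x hx y hy hxy
      rcases mem_insert.1 hx with hx' | hx' <;> rcases mem_insert.1 hy with hy' | hy'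
      · exact absurd (hx'.trans hy'.symm) hxy
      · exact hx' ▸ (fun h => hcon y hy' (hsym _ _ h))
      · exact hy' ▸ hcon x hx'
      · exact hfar x hx' y hy' hxy
    have := hmax _ hmem
    rw [card_insert_of_notMem hvC] at this
    omega
  have hsub : V ⊆ C.biUnion (fun c => V.filter (fun v => R c v)) := by
    intro v hv
    obtain ⟨c, hc, hr⟩ := hcov v hv
    exact mem_biUnion.2 ⟨c, hc, mem_filter.2 ⟨hv, hr⟩⟩
  calc V.card ≤ (C.biUnion (fun c => V.filter (fun v => R c v))).card := card_le_card hsub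
    _ ≤ ∑ c ∈ C, (V.filter (fun v => R c v)).card := card_biUnion_le
    _ ≤ ∑ c ∈ C, B := sum_le_sum (fun c hc => hB c (hCV hc))
    _ = C.card * B := by rw [sum_const, smul_eq_mul]

lemma count_lower (p s : ℕ) (a : ℝ) (ha : a ≠ 0) :
    (p.choose s) * 2^s ≤
      ((Fintype.piFinset fun _ : Fin p => ({-a, 0, a} : Finset ℝ)).filter
        (fun θ => (univ.filter fun i => θ i ≠ 0).card = s)).card := by
  classical
  set V := (Fintype.piFinset fun _ : Fin p => ({-a, 0, a} : Finset ℝ)).filter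
        (fun θ => (univ.filter fun i => θ i ≠ 0).card = s) with hV
  set E := ((univ : Finset (Fin p)).powersetCard s).sigma
      (fun S => Fintype.piFinset fun i => if i ∈ S then ({-a, a} : Finset ℝ) else ({0} : Finset ℝ))
    with hE
  have hmemV : ∀ x ∈ E, x.2 ∈ V := by
    rintro ⟨S, g⟩ hx
    rw [hE, mem_sigma] at hx
    obtain ⟨hS, hg⟩ := hx
    rw [Fintype.mem_piFinset] at hg
    have hSc : S.card = s := (mem_powersetCard_univ.1 hS)
    have hgS : ∀ i, (g i ≠ 0 ↔ i ∈ S) := by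
      intro i
      by_cases hi : i ∈ S
      · have := hg i
        rw [if_pos hi] at this
        simp only [mem_insert, mem_singleton] at this
        constructor
        · intro _; exact hi
        · intro _
          rcases this with h | h <;> rw [h] <;> simpa using ha
      · have := hg i
        rw [if_neg hi] at this
        simp only [mem_singleton] at this
        simp [this, hi]
    rw [hV, mem_filter]
    constructor
    · rw [Fintype.mem_piFinset]
      intro i
      have := hg i
      by_cases hi : i ∈ S
      · rw [if_pos hi] at this
        simp only [mem_insert, mem_singleton] at this ⊢
        tauto
      · rw [if_neg hi] at this
        simp only [mem_singleton] at this
        simp [this]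
    · rw [← hSc]
      congr 1
      ext i
      simp [hgS i]
  have hinj : Set.InjOn (fun x : (Σ _ : Finset (Fin p), (Fin p → ℝ)) => x.2) E := by
    rintro ⟨S, g⟩ hx ⟨S', g'⟩ hy (h : g = g')
    subst h
    simp only [Finset.mem_coe, hE, mem_sigma] at hx hy
    have hSS : S = S' := by
      ext i
      have h1 := (Fintype.mem_piFinset.1 hx.2) i
      have h2 := (Fintype.mem_piFinset.1 hy.2) i
      by_cases hi : i ∈ S <;> by_cases hi' : i ∈ S' <;> [skip; skip; skip; skip]
      · simp [hi, hi']
      · rw [if_pos hi] at h1; rw [if_neg hi'] at h2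
        simp only [mem_insert, mem_singleton] at h1
        simp only [mem_singleton] at h2
        rcases h1 with h | h <;> rw [h2] at h <;> simp_all
      · rw [if_neg hi] at h1; rw [if_pos hi'] at h2
        simp only [mem_insert, mem_singleton] at h2
        simp only [mem_singleton] at h1
        rcases h2 with h | h <;> rw [h1] at h <;> simp_all
      · simp [hi, hi']
    subst hSS
    rfl
  have hcard : E.card = p.choose s * 2^s := by
    rw [hE, card_sigma]
    have : ∀ S ∈ (univ : Finset (Fin p)).powersetCard s,
        (Fintype.piFinset fun i => if i ∈ S then ({-a, a} : Finset ℝ) else ({0} : Finset ℝ)).card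
          = 2^s := by
      intro S hS
      rw [Fintype.card_piFinset]
      have hSc : S.card = s := mem_powersetCard_univ.1 hS
      have hna : -a ≠ a := by intro h; apply ha; linarith
      have h2 : ({-a, a} : Finset ℝ).card = 2 := by
        rw [card_insert_of_notMem (by simpa using hna), card_singleton]
      calc (∏ i, (if i ∈ S then ({-a, a} : Finset ℝ) else ({0} : Finset ℝ)).card)
          = ∏ i, (if i ∈ S then 2 else 1) := by
            apply prod_congr rfl
            intro i _
            by_cases hi : i ∈ S <;> simp [hi, h2]
        _ = 2^s := by
            rw [prod_ite_mem univ S (fun _ => (2:ℕ)), univ_inter, prod_const, hSc]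
    rw [sum_congr rfl this, sum_const, card_powersetCard, card_univ, Fintype.card_fin, smul_eq_mul]
  rw [← hcard]
  exact card_le_card_of_injOn _ hmemV hinj

lemma ball_bound (p r : ℕ) (T : Finset ℝ) (hT : T.card ≤ 3) (c : Fin p → ℝ)
    (hc : ∀ i, c i ∈ T) (W : Finset (Fin p → ℝ)) (hW : ∀ v ∈ W, ∀ i, v i ∈ T) :
    (W.filter fun v => (univ.filter fun i => v i ≠ c i).card ≤ r).card
      ≤ ∑ t ∈ Finset.range (r+1), p.choose t * 2^t := by
  classical
  set F := (Finset.range (r+1)).sigma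
      (fun t => ((univ : Finset (Fin p)).powersetCard t).sigma
        (fun D => Fintype.piFinset fun i => if i ∈ D then T.erase (c i) else ({c i} : Finset ℝ)))
    with hF
  have hmap : ∀ v ∈ W.filter (fun v => (univ.filter fun i => v i ≠ c i).card ≤ r),
      (⟨(univ.filter fun i => v i ≠ c i).card, ⟨(univ.filter fun i => v i ≠ c i), v⟩⟩ :
        Σ _ : ℕ, Σ _ : Finset (Fin p), (Fin p → ℝ)) ∈ F := by
    intro v hv
    rw [mem_filter] at hv
    obtain ⟨hvW, hvr⟩ := hv
    refine Finset.mem_sigma.2 ⟨Finset.mem_range.2 (Nat.lt_succ_of_le hvr), Finset.mem_sigma.2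
      ⟨mem_powersetCard_univ.2 rfl, Fintype.mem_piFinset.2 ?_⟩⟩
    intro i
    by_cases hi : v i ≠ c i
    · rw [if_pos (by simp [hi])]
      exact mem_erase.2 ⟨hi, hW v hvW i⟩
    · rw [if_neg (by simp [hi])]
      push_neg at hi
      simp [hi]
  have hinj : Set.InjOn (fun v : Fin p → ℝ =>
      (⟨(univ.filter fun i => v i ≠ c i).card, ⟨(univ.filter fun i => v i ≠ c i), v⟩⟩ :
        Σ _ : ℕ, Σ _ : Finset (Fin p), (Fin p → ℝ)))
      (W.filter fun v => (univ.filter fun i => v i ≠ c i).card ≤ r) := by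
    intro u hu v hv h
    have := congrArg (fun x : Σ _ : ℕ, Σ _ : Finset (Fin p), (Fin p → ℝ) => x.2.2) h
    exact this
  have hcard : F.card ≤ ∑ t ∈ Finset.range (r+1), p.choose t * 2^t := by
    rw [hF, card_sigma]
    apply sum_le_sum
    intro t _
    rw [card_sigma]
    have hbd : ∀ D ∈ (univ : Finset (Fin p)).powersetCard t,
        (Fintype.piFinset fun i => if i ∈ D then T.erase (c i) else ({c i} : Finset ℝ)).card
          ≤ 2^t := by
      intro D hD
      have hDc : D.card = t := mem_powersetCard_univ.1 hD
      rw [Fintype.card_piFinset]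
      calc (∏ i, (if i ∈ D then T.erase (c i) else ({c i} : Finset ℝ)).card)
          ≤ ∏ i, (if i ∈ D then 2 else 1) := by
            apply prod_le_prod'
            intro i _
            by_cases hi : i ∈ D
            · rw [if_pos hi, if_pos hi, card_erase_of_mem (hc i)]
              omega
            · simp [hi]
        _ = 2^t := by
            rw [prod_ite_mem univ D (fun _ => (2:ℕ)), univ_inter, prod_const, hDc]
    calc ∑ D ∈ (univ : Finset (Fin p)).powersetCard t,
          (Fintype.piFinset fun i => if i ∈ D then T.erase (c i) else ({c i} : Finset ℝ)).card
        ≤ ∑ D ∈ (univ : Finset (Fin p)).powersetCard t, 2^t := sum_le_sum hbd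
      _ = p.choose t * 2^t := by
          rw [sum_const, card_powersetCard, card_univ, Fintype.card_fin, smul_eq_mul]
  exact le_trans (card_le_card_of_injOn _ hmap hinj) hcard

lemma numeric (s p : ℕ) (hs : 1 ≤ s) (hp : 3*s < p) :
    Real.exp ((s:ℝ)/2 * Real.log (((p:ℝ) - s)/((s:ℝ)/2))) *
      (∑ t ∈ Finset.range ((s-1)/2 + 1), (p.choose t : ℝ) * 2^t)
    ≤ (p.choose s : ℝ) * 2^s := by
  set c : ℕ → ℝ := fun t => (p.choose t : ℝ) * 2^t with hc
  set x : ℝ := ((p:ℝ) - s)/((s:ℝ)/2) with hx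
  set r : ℕ := (s-1)/2 with hr
  have hs0 : (0:ℝ) < s := by exact_mod_cast hs
  have hp3 : (3:ℝ)*s < p := by exact_mod_cast hp
  have hx4 : (4:ℝ) ≤ x := by
    rw [hx, le_div_iff₀ (by positivity)]
    linarith
  have hx0 : (0:ℝ) < x := by linarith
  have hct : ∀ t, 0 ≤ c t := by intro t; rw [hc]; positivity
  have hstep : ∀ t, t < s → x * c t ≤ c (t+1) := by
    intro t ht
    have hts : (t:ℝ) + 1 ≤ s := by exact_mod_cast ht
    have htp : t < p := by omega
    have hrec : ((p.choose (t+1) : ℝ)) * ((t:ℝ)+1) = (p.choose t : ℝ) * ((p:ℝ) - t) := by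
      have h := Nat.choose_succ_right_eq p t
      have h' : ((p.choose (t+1) * (t+1) : ℕ) : ℝ) = ((p.choose t * (p - t) : ℕ) : ℝ) := by
        exact_mod_cast congrArg (fun n : ℕ => (n : ℝ)) h
      push_cast [Nat.cast_sub (le_of_lt htp)] at h'
      linarith
    have ht1 : (0:ℝ) < (t:ℝ) + 1 := by positivity
    have hxle : x ≤ 2*((p:ℝ) - t)/((t:ℝ)+1) := by
      rw [hx, div_le_div_iff₀ (by positivity) ht1]
      nlinarith
    have hc1 : c (t+1) * ((t:ℝ)+1) = c t * (2*((p:ℝ) - t)) := by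
      calc c (t+1) * ((t:ℝ)+1) = ((p.choose (t+1):ℝ) * ((t:ℝ)+1)) * 2^(t+1) := by
            rw [hc]; ring
        _ = ((p.choose t : ℝ) * ((p:ℝ) - t)) * 2^(t+1) := by rw [hrec]
        _ = c t * (2*((p:ℝ) - t)) := by rw [hc]; dsimp only; rw [pow_succ]; ring
    have h2 : x * ((t:ℝ)+1) ≤ 2*((p:ℝ) - t) := (le_div_iff₀ ht1).1 hxle
    have : x * c t * ((t:ℝ)+1) ≤ c (t+1) * ((t:ℝ)+1) := by
      rw [hc1]; nlinarith [hct t]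
    exact le_of_mul_le_mul_right this ht1
  have hrs : r < s := by omega
  have hsum : ∀ m, m < s → ∑ t ∈ Finset.range (m+1), c t ≤ 4/3 * c m := by
    intro m
    induction m with
    | zero => intro _; rw [Finset.sum_range_one]; nlinarith [hct 0]
    | succ m ih =>
      intro hm
      have hm' : m < s := by omega
      have h4 : 4 * c m ≤ c (m+1) := by
        have := hstep m hm'
        nlinarith [hct m]
      rw [Finset.sum_range_succ]
      have := ih hm'
      linarith
  have hpow : ∀ k, r + k ≤ s → c r * x^k ≤ c (r+k) := by
    intro k
    induction k with
    | zero => intro _; simp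
    | succ k ih =>
      intro hk
      have hk' : r + k ≤ s := by omega
      have h1 := ih hk'
      have h2 := hstep (r+k) (by omega)
      calc c r * x^(k+1) = (c r * x^k) * x := by ring
        _ ≤ c (r+k) * x := mul_le_mul_of_nonneg_right h1 (le_of_lt hx0)
        _ = x * c (r+k) := by ring
        _ ≤ c (r+k+1) := h2
      -- note r+(k+1) = r+k+1
  set n : ℕ := s - r with hn
  have hrn : r + n = s := by omega
  have h2n : s + 1 ≤ 2*n := by omega
  have hL : Real.exp ((s:ℝ)/2 * Real.log x) = x ^ ((s:ℝ)/2) := by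
    rw [Real.rpow_def_of_pos hx0, mul_comm]
  have hx1 : (1:ℝ) < x := by linarith
  have hhalf : (4:ℝ)^((1:ℝ)/2) = 2 := by
    rw [show (4:ℝ) = 2^(2:ℕ) by norm_num, ← Real.rpow_natCast 2 2,
      ← Real.rpow_mul (by norm_num)]
    norm_num
  have hkey : Real.exp ((s:ℝ)/2 * Real.log x) * (4/3) ≤ x^n := by
    have hexp : (1:ℝ)/2 ≤ (n:ℝ) - (s:ℝ)/2 := by
      have : ((s:ℝ) + 1) ≤ 2*(n:ℝ) := by exact_mod_cast h2n
      linarith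
    have e1 : x^n = x ^ ((n:ℝ)) := (Real.rpow_natCast x n).symm
    have e2 : x ^ ((n:ℝ)) = x ^ ((s:ℝ)/2) * x ^ ((n:ℝ) - (s:ℝ)/2) := by
      rw [← Real.rpow_add hx0]; ring_nf
    have e3 : x ^ ((1:ℝ)/2) ≤ x ^ ((n:ℝ) - (s:ℝ)/2) :=
      (Real.rpow_le_rpow_left_iff hx1).2 hexp
    have e4 : (2:ℝ) ≤ x ^ ((1:ℝ)/2) := by
      calc (2:ℝ) = (4:ℝ)^((1:ℝ)/2) := hhalf.symm
        _ ≤ x ^ ((1:ℝ)/2) := Real.rpow_le_rpow (by norm_num) hx4 (by norm_num)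
    have hLpos : 0 < x ^ ((s:ℝ)/2) := Real.rpow_pos_of_pos hx0 _
    rw [hL, e1, e2]
    have : (2:ℝ) ≤ x ^ ((n:ℝ) - (s:ℝ)/2) := le_trans e4 e3
    nlinarith
  calc Real.exp ((s:ℝ)/2 * Real.log x) * (∑ t ∈ Finset.range (r + 1), c t)
      ≤ Real.exp ((s:ℝ)/2 * Real.log x) * (4/3 * c r) := by
        apply mul_le_mul_of_nonneg_left (hsum r hrs) (le_of_lt (Real.exp_pos _))
    _ = (Real.exp ((s:ℝ)/2 * Real.log x) * (4/3)) * c r := by ring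
    _ ≤ x^n * c r := mul_le_mul_of_nonneg_right hkey (hct r)
    _ = c r * x^n := by ring
    _ ≤ c (r+n) := hpow n (le_of_eq hrn)
    _ = c s := by rw [hrn]



/-- Varshamov–Gilbert-type packing of `s`-sparse ternary vectors: for `δ > 0` and
`1 ≤ s < p/3` there is a subset `Θ̃` of
`Θ(δ,s) = {θ ∈ {−δ√(2/s),0,δ√(2/s)}^p : ‖θ‖₀ = s}` of cardinality at least
`exp((s/2) log((p−s)/(s/2)))` whose distinct elements satisfy
`δ² ≤ ‖θ − θ'‖₂² ≤ 8δ²`. -/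
theorem stmt17 (δ : ℝ) (hδ : 0 < δ) (s p : ℕ) (hs : 1 ≤ s) (hsp : (s : ℝ) < (p : ℝ) / 3) :
    ∃ Θ : Finset (Fin p → ℝ),
      (∀ θ ∈ Θ,
        (∀ i, θ i ∈ ({-(δ * Real.sqrt (2 / s)), 0, δ * Real.sqrt (2 / s)} : Set ℝ)) ∧
        (Finset.univ.filter (fun i => θ i ≠ 0)).card = s) ∧
      Real.exp ((s : ℝ) / 2 * Real.log (((p : ℝ) - s) / ((s : ℝ) / 2))) ≤ (Θ.card : ℝ) ∧
      ∀ θ ∈ Θ, ∀ θ' ∈ Θ, θ ≠ θ' →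
        δ ^ 2 ≤ (∑ i, (θ i - θ' i) ^ 2) ∧ (∑ i, (θ i - θ' i) ^ 2) ≤ 8 * δ ^ 2 := by
  have hs0 : (0:ℝ) < s := by exact_mod_cast hs
  have hp : 3*s < p := by
    have : (3:ℝ)*s < p := by linarith
    exact_mod_cast this
  obtain ⟨a, haa⟩ : ∃ a : ℝ, a = δ * Real.sqrt (2 / ↑s) := ⟨_, rfl⟩
  have hsqrt : (0:ℝ) < Real.sqrt (2 / ↑s) := Real.sqrt_pos.2 (by positivity)
  have ha0 : 0 < a := by rw [haa]; positivity
  have ha : a ≠ 0 := ne_of_gt ha0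
  have ha2 : a^2 = 2*δ^2/(s:ℝ) := by
    rw [haa, mul_pow, Real.sq_sqrt (by positivity : (0:ℝ) ≤ 2/(s:ℝ))]
    ring
  set T : Finset ℝ := {-a, 0, a} with hTT
  have hT3 : T.card ≤ 3 := by
    rw [hTT]
    apply le_trans (card_insert_le _ _)
    have : ({0, a} : Finset ℝ).card ≤ 2 := le_trans (card_insert_le _ _) (by simp)
    omega
  set r : ℕ := (s-1)/2 with hrr
  set V : Finset (Fin p → ℝ) := (Fintype.piFinset fun _ : Fin p => T).filter
      (fun θ => (Finset.univ.filter (fun i => θ i ≠ 0)).card = s) with hVV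
  set B : ℕ := ∑ t ∈ Finset.range (r+1), p.choose t * 2^t with hBB
  have hWT : ∀ v ∈ V, ∀ i, v i ∈ T := by
    intro v hv i
    exact Fintype.mem_piFinset.1 (mem_filter.1 hv).1 i
  obtain ⟨C, hCV, hfar, hcount⟩ :=
    greedy V (fun u v => (Finset.univ.filter (fun i => v i ≠ u i)).card ≤ r)
      (fun v _ => by simp)
      (fun u v h => by
        have : (Finset.univ.filter (fun i => u i ≠ v i)) =
            (Finset.univ.filter (fun i => v i ≠ u i)) := by
          apply filter_congr; intro i _; simp [ne_comm]
        simpa [this] using h)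
      B
      (fun c hc => by
        have := ball_bound p r T hT3 c (hWT c hc) V hWT
        exact this)
  have hVlow : p.choose s * 2^s ≤ V.card := count_lower p s a ha
  have hnum := numeric s p hs hp
  have hB1 : 1 ≤ B := by
    rw [hBB]
    calc 1 = p.choose 0 * 2^0 := by simp
      _ ≤ ∑ t ∈ Finset.range (r+1), p.choose t * 2^t :=
        Finset.single_le_sum (f := fun t => p.choose t * 2^t) (fun i _ => Nat.zero_le _)
          (Finset.mem_range.2 (by omega))
  -- membership facts for elements of C
  have hmem : ∀ θ ∈ C,
      (∀ i, θ i ∈ ({-(δ * Real.sqrt (2 / s)), 0, δ * Real.sqrt (2 / s)} : Set ℝ)) ∧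
      (Finset.univ.filter (fun i => θ i ≠ 0)).card = s := by
    intro θ hθ
    have hθV := hCV hθ
    constructor
    · intro i
      have := hWT θ hθV i
      rw [hTT] at this
      simp only [Finset.mem_insert, Finset.mem_singleton] at this
      simp only [Set.mem_insert_iff, Set.mem_singleton_iff]
      rw [← haa]
      tauto
    · exact (mem_filter.1 hθV).2
  refine ⟨C, hmem, ?_, ?_⟩
  · -- cardinality
    have hc1 : (V.card : ℝ) ≤ (C.card : ℝ) * (B : ℝ) := by exact_mod_cast hcount
    have hc2 : ((p.choose s * 2^s : ℕ) : ℝ) ≤ (V.card : ℝ) := by exact_mod_cast hVlow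
    have hc3 : Real.exp ((s : ℝ) / 2 * Real.log (((p : ℝ) - s) / ((s : ℝ) / 2))) * (B : ℝ)
        ≤ ((p.choose s * 2^s : ℕ) : ℝ) := by
      rw [hBB]
      push_cast
      push_cast at hnum
      exact hnum
    have hBpos : (0:ℝ) < (B:ℝ) := by exact_mod_cast hB1
    have := le_trans hc3 (le_trans hc2 hc1)
    exact le_of_mul_le_mul_right (by linarith) hBpos
  · -- distances
    intro θ hθ θ' hθ' hne
    clear hnum hVlow hB1 hmem hcount hsp hp hBB
    clear B
    have hθV := hCV hθ
    have hθ'V := hCV hθ'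
    have hham : r + 1 ≤ (Finset.univ.filter (fun i => θ' i ≠ θ i)).card := by
      have := hfar θ hθ θ' hθ' hne
      omega
    have hco : ∀ x y : ℝ, x ∈ T → y ∈ T → x ≠ y → a^2 ≤ (x - y)^2 := by
      intro x y hx hy hxy
      rw [hTT] at hx hy
      simp only [Finset.mem_insert, Finset.mem_singleton] at hx hy
      rcases hx with h | h | h <;> rcases hy with h' | h' | h' <;>
        first
          | exact absurd (h.trans h'.symm) hxy
          | (rw [h, h']; nlinarith [sq_nonneg a, ha0])
    have hsq : ∀ v ∈ V, ∑ i, (v i)^2 = 2*δ^2 := by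
      intro v hv
      have hfil : ∑ i ∈ Finset.univ.filter (fun i => v i ≠ 0), (v i)^2 = ∑ i, (v i)^2 := by
        apply Finset.sum_filter_of_ne
        intro i _ h
        intro h0
        rw [h0] at h
        simp at h
      rw [← hfil]
      have : ∀ i ∈ Finset.univ.filter (fun i => v i ≠ 0), (v i)^2 = a^2 := by
        intro i hi
        have hi0 : v i ≠ 0 := (mem_filter.1 hi).2
        have := hWT v hv i
        rw [hTT] at this
        simp only [Finset.mem_insert, Finset.mem_singleton] at this
        rcases this with h | h | h
        · rw [h]; ring
        · exact absurd h hi0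
        · rw [h]
      rw [Finset.sum_congr rfl this, Finset.sum_const, (mem_filter.1 hv).2, nsmul_eq_mul, ha2]
      field_simp
    constructor
    · -- lower bound
      have h1 : ∑ i ∈ Finset.univ.filter (fun i => θ' i ≠ θ i), (θ i - θ' i)^2
          ≤ ∑ i, (θ i - θ' i)^2 := by
        apply Finset.sum_le_sum_of_subset_of_nonneg (Finset.filter_subset _ _)
        intro i _ _
        positivity
      have h2 : ((Finset.univ.filter (fun i => θ' i ≠ θ i)).card : ℝ) * a^2
          ≤ ∑ i ∈ Finset.univ.filter (fun i => θ' i ≠ θ i), (θ i - θ' i)^2 := by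
        rw [← nsmul_eq_mul]
        apply Finset.card_nsmul_le_sum
        intro i hi
        exact hco _ _ (hWT θ hθV i) (hWT θ' hθ'V i) (fun h => (mem_filter.1 hi).2 h.symm)
      have h3 : ((r:ℝ) + 1) * a^2 ≤
          ((Finset.univ.filter (fun i => θ' i ≠ θ i)).card : ℝ) * a^2 := by
        apply mul_le_mul_of_nonneg_right _ (by positivity)
        exact_mod_cast hham
      have h4 : δ^2 ≤ ((r:ℝ) + 1) * a^2 := by
        rw [ha2]
        have hr2 : s ≤ 2*(r+1) := by omega
        have hr2' : (s:ℝ) ≤ 2*((r:ℝ)+1) := by exact_mod_cast hr2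
        rw [show ((r:ℝ)+1) * (2*δ^2/(s:ℝ)) = (((r:ℝ)+1) * (2*δ^2))/(s:ℝ) by ring,
          le_div_iff₀ hs0]
        nlinarith [sq_nonneg δ]
      linarith
    · -- upper bound
      have h1 : ∀ i : Fin p, (θ i - θ' i)^2 ≤ 2*(θ i)^2 + 2*(θ' i)^2 := by
        intro i
        nlinarith [sq_nonneg (θ i + θ' i)]
      calc ∑ i, (θ i - θ' i)^2 ≤ ∑ i, (2*(θ i)^2 + 2*(θ' i)^2) :=
            Finset.sum_le_sum (fun i _ => h1 i)
        _ = 2*(∑ i, (θ i)^2) + 2*(∑ i, (θ' i)^2) := by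
            rw [Finset.sum_add_distrib, ← Finset.mul_sum, ← Finset.mul_sum]
        _ = 8 * δ^2 := by rw [hsq θ hθV, hsq θ' hθ'V]; ring
end
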